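/- Any state that is a model of a basic separation-logic formula φ has tree width at most max(|φ|, |PVar|), where |φ| is the total number of variable occurrences in the spatial part of φ: formally, if S = ⟨s,h⟩ and interpretation ι satisfy S,ι ⊨ φ for a basic SL formula φ (a quantified conjunction of a pure and a spatial part under strict points-to semantics), then tw(S) ≤ max(|φ|, |PVar|). -/

import Mathlib

namespace SLTW

/-- Tree positions: finite sequences of naturals. -/
abbrev Pos := List ℕ

/-- `parentOf p q` : `p` is the parent of `q`, i.e. `q = p.i`. -/
def parentOf (p q : Pos) : Prop := ∃ i : ℕ, q = p ++ [i]

/-- Adjacency in a tree: parent in either direction. -/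
def adj (p q : Pos) : Prop := parentOf p q ∨ parentOf q p

/-- A path in a tree with domain `D` from `p` to `q`: pairwise distinct positions,
consecutive ones related by the parent relation. -/
def isPath (D : Set Pos) (l : List Pos) (p q : Pos) : Prop :=
  l ≠ [] ∧ l.Chain' adj ∧ l.Nodup ∧ (∀ x ∈ l, x ∈ D) ∧ l.head? = some p ∧ l.getLast? = some q

/-- `q` lies on some path from `p` to `r` in the tree with domain `D`. -/
def onPath (D : Set Pos) (q p r : Pos) : Prop := ∃ l, isPath D l p r ∧ q ∈ l

/-- A prefix-closed set of tree positions. -/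
def prefixClosed (D : Set Pos) : Prop := ∀ p q : Pos, p <+: q → q ∈ D → p ∈ D

/-- A tree decomposition of a graph with vertex set `V` and (directed) edge set `E`. -/
structure TreeDecomp {α : Type} (V : Set α) (E : Set (α × α)) where
  dom : Set Pos
  bag : Pos → Set α
  dom_fin : dom.Finite
  dom_pc : prefixClosed dom
  cover_v : ∀ v ∈ V, ∃ p ∈ dom, v ∈ bag p
  cover_e : ∀ e ∈ E, ∃ p ∈ dom, e.1 ∈ bag p ∧ e.2 ∈ bag p
  conn : ∀ p q r, p ∈ dom → q ∈ dom → r ∈ dom → onPath dom q p r →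
    bag p ∩ bag r ⊆ bag q

/-- The decomposition has width at most `w`: every bag is finite of cardinality `≤ w + 1`. -/
def TreeDecomp.widthLE {α : Type} {V : Set α} {E : Set (α × α)}
    (t : TreeDecomp V E) (w : ℕ) : Prop :=
  ∀ p ∈ t.dom, (t.bag p).Finite ∧ (t.bag p).ncard ≤ w + 1

/-- The graph `(V, E)` has tree width at most `w`. -/
def twLE {α : Type} (V : Set α) (E : Set (α × α)) (w : ℕ) : Prop :=
  ∃ t : TreeDecomp V E, t.widthLE w

/-! ### States of Separation Logic -/

abbrev Loc := ℕ
abbrev PVar := ℕ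
abbrev Sel := ℕ
abbrev Heap := Loc → Option (Sel → Option Loc)
abbrev Store := PVar → Option Loc

structure SLState where
  store : Store
  heap : Heap

/-- Domain of the heap (allocated locations). -/
def SLState.hdom (S : SLState) : Set Loc := {l | S.heap l ≠ none}
/-- Image of the store. -/
def SLState.simg (S : SLState) : Set Loc := {l | ∃ u, S.store u = some l}
/-- Image of the heap: destinations of selector edges. -/
def SLState.hImg (S : SLState) : Set Loc :=
  {l | ∃ a f k, S.heap a = some f ∧ f k = some l}
/-- All locations of a state. -/
def SLState.locs (S : SLState) : Set Loc := S.simg ∪ S.hdom ∪ S.hImg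
/-- Edges of the state, seen as a graph. -/
def SLState.edges (S : SLState) : Set (Loc × Loc) :=
  {e | ∃ f k, S.heap e.1 = some f ∧ f k = some e.2}
/-- Tree width of a state is at most `w`. -/
def SLState.twLE (S : SLState) (w : ℕ) : Prop := SLTW.twLE S.locs S.edges w



/-! ### Syntax of basic SL formulae -/

abbrev LVar := ℕ
/-- Variables: program variables or logical variables. -/
abbrev Var := PVar ⊕ LVar

/-- Combined evaluation `s ⊕ ι` of program and logical variables. -/
def eval (s : Store) (ι : LVar → Option Loc) : Var → Option Loc
  | Sum.inl u => s u
  | Sum.inr x => ι x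

inductive PureF where
  | eq (a b : Var)
  | ne (a b : Var)
  | and (p q : PureF)

inductive SpatialF where
  | emp
  | pto (a : Var) (bs : List Var)
  | star (s₁ s₂ : SpatialF)

inductive BasicF where
  | base (p : PureF) (s : SpatialF)
  | ex (x : LVar) (f : BasicF)

/-- Number of variable occurrences in a spatial formula. -/
def SpatialF.size : SpatialF → ℕ
  | .emp => 0
  | .pto _ bs => 1 + bs.length
  | .star s₁ s₂ => s₁.size + s₂.size

/-- Size of a basic formula: variable occurrences of its spatial part. -/
def BasicF.size : BasicF → ℕ
  | .base _ s => s.size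
  | .ex _ f => f.size

/-- Two heaps have disjoint domains. -/
def heapDisj (h₁ h₂ : Heap) : Prop := ∀ l, h₁ l = none ∨ h₂ l = none

/-- Union of two heaps (left-biased, used under disjointness). -/
def heapUnion (h₁ h₂ : Heap) : Heap := fun l => (h₁ l).orElse (fun _ => h₂ l)

/-- The heap of a single allocated cell at `la` with selectors `1..n` pointing to
the evaluations of `bs` (strict semantics). -/
def ptoHeap (s : Store) (ι : LVar → Option Loc) (la : Loc) (bs : List Var) : Heap :=
  fun l => if l = la then
    some (fun k => if 1 ≤ k ∧ k ≤ bs.length then eval s ι (bs.getD (k-1) (Sum.inr 0)) else none)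
  else none

def PureSat (S : SLState) (ι : LVar → Option Loc) : PureF → Prop
  | .eq a b => eval S.store ι a = eval S.store ι b ∧ eval S.store ι a ≠ none
  | .ne a b => eval S.store ι a ≠ eval S.store ι b ∧
      eval S.store ι a ≠ none ∧ eval S.store ι b ≠ none
  | .and p q => PureSat S ι p ∧ PureSat S ι q

/-- Strict semantics of spatial formulae. -/
def SpSat (S : SLState) (ι : LVar → Option Loc) : SpatialF → Prop
  | .emp => ∀ l, S.heap l = none
  | .pto a bs => ∃ la, eval S.store ι a = some la ∧ (∀ b ∈ bs, eval S.store ι b ≠ none) ∧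
      S.heap = ptoHeap S.store ι la bs
  | .star s₁ s₂ => ∃ h₁ h₂, heapDisj h₁ h₂ ∧ S.heap = heapUnion h₁ h₂ ∧
      SpSat ⟨S.store, h₁⟩ ι s₁ ∧ SpSat ⟨S.store, h₂⟩ ι s₂

def BasicSat (S : SLState) (ι : LVar → Option Loc) : BasicF → Prop
  | .base p s => PureSat S ι p ∧ SpSat S ι s
  | .ex x f => ∃ l : Loc, BasicSat S (Function.update ι x (some l)) f

/-- Iterated separating conjunction. -/
def bigStar (l : List SpatialF) : SpatialF := l.foldr SpatialF.star SpatialF.emp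


/-- Auxiliary: all locations touched by a heap (allocated or pointed to). -/
def hset (h : Heap) : Set Loc :=
  {l | h l ≠ none} ∪ {l | ∃ a f k, h a = some f ∧ f k = some l}

lemma spSat_hset (sp : SpatialF) : ∀ (s : Store) (h : Heap) (ι : LVar → Option Loc),
    SpSat ⟨s, h⟩ ι sp → ∃ F : Finset Loc, hset h ⊆ ↑F ∧ F.card ≤ sp.size := by
  induction sp with
  | emp =>
    intro s h ι hs
    refine ⟨∅, ?_, by simp⟩
    rintro l (hl | ⟨a, f, k, hf, _⟩)
    · exact absurd (hs l) hl
    · exact absurd (hs a) (by simp [hf])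
  | pto a bs =>
    intro s h ι hs
    obtain ⟨la, hla, hbs, hheap0⟩ := hs
    have hheap : h = ptoHeap s ι la bs := hheap0
    refine ⟨insert la ((bs.map (fun b => (eval s ι b).getD 0)).toFinset), ?_, ?_⟩
    · rintro l (hl | ⟨x, f, k, hf, hfk⟩)
      · -- allocated location must be la
        by_cases hx : l = la
        · simp [hx]
        · exact absurd (by simp [hheap, ptoHeap, hx]) hl
      · -- pointed-to location is the evaluation of some b ∈ bs
        have hx : x = la := by
          by_contra hx
          simp [hheap, ptoHeap, hx] at hf
        subst hx
        simp only [hheap, ptoHeap, if_true, eq_self_iff_true, Option.some.injEq] at hf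
        subst hf
        by_cases hk : 1 ≤ k ∧ k ≤ bs.length
        · obtain ⟨hk1, hk2⟩ := hk
          simp only [if_pos (And.intro hk1 hk2)] at hfk
          have hlt : k - 1 < bs.length := lt_of_lt_of_le (Nat.sub_lt hk1 Nat.one_pos) hk2
          have hmem : bs.getD (k-1) (Sum.inr 0) ∈ bs := by
            rw [List.getD_eq_getElem _ _ hlt]
            exact List.getElem_mem _
          have : (eval s ι (bs.getD (k-1) (Sum.inr 0))).getD 0 = l := by
            rw [hfk]; rfl
          simp only [Finset.coe_insert, Set.mem_insert_iff, List.coe_toFinset,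
            List.mem_map, Set.mem_setOf_eq]
          exact Or.inr ⟨_, hmem, this⟩
        · simp [if_neg hk] at hfk
    · calc _ ≤ (bs.map (fun b => (eval s ι b).getD 0)).toFinset.card + 1 :=
            Finset.card_insert_le _ _
        _ ≤ bs.length + 1 := by
            have := (bs.map (fun b => (eval s ι b).getD 0)).toFinset_card_le
            simpa using this
        _ = SpatialF.size (.pto a bs) := by simp [SpatialF.size]; omega
  | star s₁ s₂ ih₁ ih₂ =>
    intro s h ι hs
    obtain ⟨h₁, h₂, hdisj, hun0, hs₁, hs₂⟩ := hs
    have hun : h = heapUnion h₁ h₂ := hun0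
    obtain ⟨F₁, hF₁, hc₁⟩ := ih₁ s h₁ ι hs₁
    obtain ⟨F₂, hF₂, hc₂⟩ := ih₂ s h₂ ι hs₂
    refine ⟨F₁ ∪ F₂, ?_, ?_⟩
    · have key : ∀ x f, h x = some f → h₁ x = some f ∨ h₂ x = some f := by
        intro x f hx
        rw [hun] at hx
        cases hx1 : h₁ x with
        | none =>
          right
          simpa [heapUnion, hx1] using hx
        | some g =>
          left
          have hg : heapUnion h₁ h₂ x = some g := by
            unfold heapUnion; rw [hx1]; rfl
          exact hg.symm.trans hx
      intro l hmem
      have goal : l ∈ F₁ ∨ l ∈ F₂ → l ∈ ↑(F₁ ∪ F₂) := by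
        intro h'
        have h'' : l ∈ F₁ ∪ F₂ := Finset.mem_union.mpr h'
        exact h''
      rcases hmem with hl | ⟨x, f, k, hf, hfk⟩
      · cases hx : h l with
        | none => exact absurd hx hl
        | some f =>
          rcases key l f hx with h1 | h2
          · exact goal (Or.inl (hF₁ (Or.inl (show h₁ l ≠ none by simp [h1]))))
          · exact goal (Or.inr (hF₂ (Or.inl (show h₂ l ≠ none by simp [h2]))))
      · rcases key x f hf with h1 | h2
        · exact goal (Or.inl (hF₁ (Or.inr ⟨x, f, k, h1, hfk⟩)))
        · exact goal (Or.inr (hF₂ (Or.inr ⟨x, f, k, h2, hfk⟩)))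
    · calc (F₁ ∪ F₂).card ≤ F₁.card + F₂.card := Finset.card_union_le _ _
        _ ≤ _ := by simp [SpatialF.size]; omega

lemma basicSat_hset (φ : BasicF) : ∀ (S : SLState) (ι : LVar → Option Loc),
    BasicSat S ι φ → ∃ F : Finset Loc, hset S.heap ⊆ ↑F ∧ F.card ≤ φ.size := by
  induction φ with
  | base p sp =>
    intro S ι hs
    exact spSat_hset sp S.store S.heap ι hs.2
  | ex x f ih =>
    intro S ι hs
    obtain ⟨l, hl⟩ := hs
    exact ih S _ hl

/-- A path with equal endpoints in a tree is a singleton. -/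
lemma path_self {D : Set Pos} {l : List Pos} {p : Pos} (h : isPath D l p p) : l = [p] := by
  obtain ⟨hne, _, hnd, _, hhead, hlast⟩ := h
  cases l with
  | nil => exact absurd rfl hne
  | cons a t =>
    simp only [List.head?_cons, Option.some.injEq] at hhead
    subst hhead
    cases t with
    | nil => rfl
    | cons b u =>
      exfalso
      have hl : (a :: b :: u).getLast? = some ((b :: u).getLast (by simp)) := by
        rw [List.getLast?_eq_getLast (l := a :: b :: u) (by simp), List.getLast_cons (by simp)]
      rw [hl] at hlast
      have h2 : (b :: u).getLast (by simp) = a := by injection hlast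
      exact (List.nodup_cons.mp hnd).1 (h2 ▸ List.getLast_mem (by simp))

end SLTW
open SLTW in
/-- any model of a basic SL formula `φ` has tree width at most
`max |φ| |PVar|`, where the program variables in use form the finite set `PV`. -/
theorem basic_formula_treewidth (S : SLState) (ι : LVar → Option Loc) (φ : BasicF)
    (PV : Finset PVar) (hPV : ∀ u : PVar, S.store u ≠ none → u ∈ PV)
    (hsat : BasicSat S ι φ) :
    S.twLE (max φ.size PV.card) := by
  classical
  obtain ⟨F, hF, hFc⟩ := basicSat_hset φ S ι hsat
  -- store image is covered by this finset
  set G : Finset Loc := PV.image (fun u => (S.store u).getD 0) with hG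
  have hsimg : S.simg ⊆ ↑G := by
    rintro l ⟨u, hu⟩
    exact Finset.mem_coe.mpr (Finset.mem_image.mpr ⟨u, hPV u (by simp [hu]), by simp [hu]⟩)
  have hheaplocs : S.hdom ∪ S.hImg ⊆ ↑F := by
    rintro l (hl | hl)
    · exact hF (Or.inl hl)
    · exact hF (Or.inr hl)
  -- two-node tree decomposition
  refine ⟨⟨{[], [0]}, fun p => if p = [] then ↑G else ↑F, ?_, ?_, ?_, ?_, ?_⟩, ?_⟩
  · exact (Set.finite_singleton ([] : Pos)).insert _ |>.subset (by
      intro x hx; rcases hx with h | h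
      · exact Or.inr h
      · exact Or.inl h)
  · -- prefix closed
    intro p q hpq hq
    rcases hq with hq | hq
    · subst hq
      rcases List.prefix_nil.mp hpq with rfl
      exact Or.inl rfl
    · simp only [Set.mem_singleton_iff] at hq
      subst hq
      rcases (List.prefix_cons_iff.mp hpq) with rfl | ⟨t, rfl, ht⟩
      · exact Or.inl rfl
      · rcases List.prefix_nil.mp ht with rfl
        exact Or.inr rfl
  · -- vertex cover
    intro v hv
    rcases hv with (hv | hv) | hv
    · exact ⟨[], Or.inl rfl, by simp [hsimg hv]⟩
    · exact ⟨[0], Or.inr rfl, by simp [hheaplocs (Or.inl hv)]⟩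
    · exact ⟨[0], Or.inr rfl, by simp [hheaplocs (Or.inr hv)]⟩
  · -- edge cover
    rintro ⟨a, b⟩ ⟨f, k, hf, hfk⟩
    refine ⟨[0], Or.inr rfl, ?_, ?_⟩
    · simpa using hheaplocs (Or.inl (by simp [SLState.hdom, hf]))
    · simpa using hheaplocs (Or.inr ⟨a, f, k, hf, hfk⟩)
  · -- connectivity
    intro p q r hp hq hr hpath
    by_cases hpr : p = r
    · subst hpr
      obtain ⟨l, hl, hql⟩ := hpath
      rw [path_self hl] at hql
      simp only [List.mem_singleton] at hql
      subst hql
      exact Set.inter_subset_left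
    · -- dom has two elements, p ≠ r, so q ∈ {p, r}
      have : q = p ∨ q = r := by
        rcases hp with hp | hp <;> rcases hr with hr | hr <;>
          rcases hq with hq | hq <;> simp_all
      rcases this with rfl | rfl
      · exact Set.inter_subset_left
      · exact Set.inter_subset_right
  · -- width bound
    intro p hp
    by_cases hpe : p = []
    · subst hpe
      refine ⟨by simp, ?_⟩
      show (if ([]:Pos) = [] then (↑G : Set Loc) else ↑F).ncard ≤ _
      rw [if_pos rfl, Set.ncard_coe_finset]
      calc G.card ≤ PV.card := Finset.card_image_le
        _ ≤ max φ.size PV.card + 1 := by omega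
    · refine ⟨by simp [hpe], ?_⟩
      show (if p = [] then (↑G : Set Loc) else ↑F).ncard ≤ _
      rw [if_neg hpe, Set.ncard_coe_finset]
      calc F.card ≤ φ.size := hFc
        _ ≤ max φ.size PV.card + 1 := by omega
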